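/- Let (P_n) and (Q_n) be sequences of probability measures on measurable spaces (X_n, B_n), and a_n ↓ 0. If for every ε > 0 there exists δ > 0 such that Q_n(dP_n/dQ_n < δ a_n) < ε for all large enough n, then Q_n is a_n-remotely contiguous with respect to P_n; that is, for every sequence of measurable φ_n : X_n → [0,1], P_n[φ_n] = o(a_n) implies Q_n[φ_n] = o(1). -/
import Mathlib
open MeasureTheory Filter Asymptotics
open scoped ENNReal

lemma key_ineq {X : Type*} [MeasurableSpace X] (P Q : Measure X)
    [IsProbabilityMeasure P] [IsProbabilityMeasure Q]
    (φ : X → ℝ) (hm : Measurable φ) (h0 : ∀ x, 0 ≤ φ x) (h1 : ∀ x, φ x ≤ 1)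
    (c : ℝ) (hc : 0 < c) :
    ∫ x, φ x ∂Q ≤ (Q {x | (P.rnDeriv Q x).toReal < c}).toReal
      + (∫ x, φ x ∂P) / c := by
  set f : X → ℝ≥0∞ := fun x => ENNReal.ofReal (φ x) with hf
  set A : Set X := {x | (P.rnDeriv Q x).toReal < c} with hA
  have hAm : MeasurableSet A :=
    (Measure.measurable_rnDeriv P Q).ennreal_toReal measurableSet_Iio
  have hfm : Measurable f := hm.ennreal_ofReal
  have hQeq : ∫ x, φ x ∂Q = (∫⁻ x, f x ∂Q).toReal :=
    integral_eq_lintegral_of_nonneg_ae (ae_of_all _ h0) hm.aestronglyMeasurable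
  have hPeq : ∫ x, φ x ∂P = (∫⁻ x, f x ∂P).toReal :=
    integral_eq_lintegral_of_nonneg_ae (ae_of_all _ h0) hm.aestronglyMeasurable
  have hfle : ∀ x, f x ≤ 1 := fun x => by
    have := ENNReal.ofReal_le_ofReal (h1 x)
    simpa [f] using this
  have hQfin : ∫⁻ x, f x ∂Q ≠ ⊤ := by
    have : ∫⁻ x, f x ∂Q ≤ 1 := by
      calc ∫⁻ x, f x ∂Q ≤ ∫⁻ _, 1 ∂Q := lintegral_mono hfle
        _ = 1 := by simp
    exact ne_top_of_le_ne_top (by simp) this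
  have hPfin : ∫⁻ x, f x ∂P ≠ ⊤ := by
    have : ∫⁻ x, f x ∂P ≤ 1 := by
      calc ∫⁻ x, f x ∂P ≤ ∫⁻ _, 1 ∂P := lintegral_mono hfle
        _ = 1 := by simp
    exact ne_top_of_le_ne_top (by simp) this
  have hc0 : ENNReal.ofReal c ≠ 0 := by simp [hc]
  have hcT : ENNReal.ofReal c ≠ ⊤ := ENNReal.ofReal_ne_top
  -- key ENNReal inequality
  have main : ∫⁻ x, f x ∂Q ≤ Q A + (∫⁻ x, f x ∂P) / ENNReal.ofReal c := by
    have hsplit : ∫⁻ x, f x ∂Q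
        = (∫⁻ x in A, f x ∂Q) + ∫⁻ x in Aᶜ, f x ∂Q :=
      (lintegral_add_compl f hAm).symm
    have h1' : ∫⁻ x in A, f x ∂Q ≤ Q A := by
      calc ∫⁻ x in A, f x ∂Q ≤ ∫⁻ _ in A, 1 ∂Q := lintegral_mono hfle
        _ = Q A := by simp
    have h2' : ∫⁻ x in Aᶜ, f x ∂Q ≤ (∫⁻ x, f x ∂P) / ENNReal.ofReal c := by
      rw [ENNReal.le_div_iff_mul_le (Or.inl hc0) (Or.inl hcT)]
      have hmul : (∫⁻ x in Aᶜ, f x ∂Q) * ENNReal.ofReal c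
          = ∫⁻ x in Aᶜ, f x * ENNReal.ofReal c ∂Q := (lintegral_mul_const _ hfm).symm
      rw [hmul]
      have step1 : ∫⁻ x in Aᶜ, f x * ENNReal.ofReal c ∂Q
          ≤ ∫⁻ x in Aᶜ, f x * P.rnDeriv Q x ∂Q := by
        refine lintegral_mono_ae ?_
        have hlt := Measure.rnDeriv_lt_top P Q
        have hlt' : ∀ᵐ x ∂(Q.restrict Aᶜ), P.rnDeriv Q x < ⊤ := ae_restrict_of_ae hlt
        filter_upwards [hlt', ae_restrict_mem hAm.compl] with x hx hxA
        have hcx : c ≤ (P.rnDeriv Q x).toReal := by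
          simpa [A, not_lt] using hxA
        have : ENNReal.ofReal c ≤ P.rnDeriv Q x :=
          (ENNReal.ofReal_le_of_le_toReal hcx)
        exact mul_le_mul_right this _
      have step2 : ∫⁻ x in Aᶜ, f x * P.rnDeriv Q x ∂Q
          ≤ ∫⁻ x, f x * P.rnDeriv Q x ∂Q := setLIntegral_le_lintegral _ _
      have step3 : ∫⁻ x, f x * P.rnDeriv Q x ∂Q
          = ∫⁻ x, f x ∂(Q.withDensity (P.rnDeriv Q)) := by
        rw [lintegral_withDensity_eq_lintegral_mul _ (Measure.measurable_rnDeriv P Q) hfm]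
        simp [mul_comm]
      have step4 : ∫⁻ x, f x ∂(Q.withDensity (P.rnDeriv Q)) ≤ ∫⁻ x, f x ∂P :=
        lintegral_mono' (Measure.withDensity_rnDeriv_le P Q) le_rfl
      exact step1.trans (step2.trans (step3 ▸ step4))
    rw [hsplit]
    exact add_le_add h1' h2'
  have hRHSfin : Q A + (∫⁻ x, f x ∂P) / ENNReal.ofReal c ≠ ⊤ := by
    refine ENNReal.add_ne_top.2 ⟨measure_ne_top _ _, ?_⟩
    exact (ENNReal.div_lt_top hPfin hc0).ne
  rw [hQeq, hPeq]
  have := ENNReal.toReal_mono hRHSfin main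
  rwa [ENNReal.toReal_add (measure_ne_top _ _) ((ENNReal.div_lt_top hPfin hc0).ne),
    ENNReal.toReal_div, ENNReal.toReal_ofReal hc.le] at this

/-- Lemma 3.2 (ii): the Radon–Nikodym small-likelihood criterion implies
`a n`-remote contiguity of `Q n` with respect to `P n`. -/
theorem stmt2
    {X : ℕ → Type*} [∀ n, MeasurableSpace (X n)]
    (P Q : (n : ℕ) → Measure (X n))
    (hP : ∀ n, IsProbabilityMeasure (P n)) (hQ : ∀ n, IsProbabilityMeasure (Q n))
    (a : ℕ → ℝ) (ha0 : ∀ n, 0 < a n) (haanti : Antitone a)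
    (halim : Tendsto a atTop (nhds 0))
    (hcrit : ∀ ε > (0:ℝ), ∃ δ > (0:ℝ), ∀ᶠ n in atTop,
      ((Q n) {x | (((P n).rnDeriv (Q n)) x).toReal < δ * a n}).toReal < ε)
    (φ : (n : ℕ) → X n → ℝ) (hmeas : ∀ n, Measurable (φ n))
    (h01 : ∀ n x, 0 ≤ φ n x ∧ φ n x ≤ 1)
    (ho : (fun n => ∫ x, φ n x ∂(P n)) =o[atTop] a) :
    Tendsto (fun n => ∫ x, φ n x ∂(Q n)) atTop (nhds 0) := by
  rw [NormedAddCommGroup.tendsto_nhds_zero]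
  intro ε hε
  obtain ⟨δ, hδ, hev⟩ := hcrit (ε/2) (by linarith)
  have hev2 := ho.def (show (0:ℝ) < δ * ε / 4 by positivity)
  filter_upwards [hev, hev2] with n h1 h2
  haveI := hP n; haveI := hQ n
  have hkey := key_ineq (P n) (Q n) (φ n) (hmeas n) (fun x => (h01 n x).1)
    (fun x => (h01 n x).2) (δ * a n) (mul_pos hδ (ha0 n))
  have hQnn : 0 ≤ ∫ x, φ n x ∂(Q n) :=
    integral_nonneg (fun x => (h01 n x).1)
  have hPnn : 0 ≤ ∫ x, φ n x ∂(P n) :=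
    integral_nonneg (fun x => (h01 n x).1)
  have ha := ha0 n
  have h2' : ∫ x, φ n x ∂(P n) ≤ δ * ε / 4 * a n := by
    have := h2
    rw [Real.norm_of_nonneg hPnn, Real.norm_of_nonneg ha.le] at this
    exact this
  have hdiv : (∫ x, φ n x ∂(P n)) / (δ * a n) ≤ ε / 4 := by
    rw [div_le_iff₀ (mul_pos hδ (ha0 n))]
    calc ∫ x, φ n x ∂(P n) ≤ δ * ε / 4 * a n := h2'
      _ = ε / 4 * (δ * a n) := by ring
  rw [Real.norm_of_nonneg hQnn]
  calc ∫ x, φ n x ∂(Q n)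
      ≤ ((Q n) {x | (((P n).rnDeriv (Q n)) x).toReal < δ * a n}).toReal
        + (∫ x, φ n x ∂(P n)) / (δ * a n) := hkey
    _ < ε/2 + ε/4 := by
        have := h1; linarith
    _ < ε := by linarith
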